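/- In the Laurent polynomial ring ℤ[x₁,...,x_{d−2}, x_{d−1}^{±1}], define y₁ = x_{d−1}^{−1} + x₁ and y_j = x_{j−1}x_{d−1}^{−1} + x_j for 2 ≤ j ≤ d−1. Then for every n ≥ 1 and 1 ≤ i ≤ d−1, 𝑃̂_d^{(n,i)}(y₁, ..., y_{d−1}) = x_{d−1}^{−n} P_{d−1}^{(n,i−1)}(x₁,...,x_{d−1}) + P_{d−1}^{(n,i)}(x₁,...,x_{d−1}). -/

import Mathlib

open Finset MvPolynomial

/-- The `i`-th elementary symmetric polynomial in `d` variables over `ℤ`. -/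
noncomputable def esymmPoly (d i : ℕ) : MvPolynomial (Fin d) ℤ :=
  ∑ t ∈ Finset.univ.powersetCard i, ∏ j ∈ t, X j

/-- The power elementary symmetric polynomial `E_d^{(n,i)}`. -/
noncomputable def powEsymmPoly (d n i : ℕ) : MvPolynomial (Fin d) ℤ :=
  ∑ t ∈ Finset.univ.powersetCard i, ∏ j ∈ t, X j ^ n

/-- The reduced polynomial obtained by setting the last variable `e_d` equal to `1`. -/
noncomputable def reducePoly (d : ℕ) (P : MvPolynomial (Fin d) ℤ) :
    MvPolynomial (Fin (d - 1)) ℤ :=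
  MvPolynomial.aeval
    (fun j : Fin d => if h : j.1 < d - 1 then X (⟨j.1, h⟩ : Fin (d - 1)) else 1) P

lemma stmt7_ringHom_aeval {S T : Type*} [CommRing S] [CommRing T] [Algebra ℤ S] [Algebra ℤ T]
    {σ : Type*} (f : S →+* T)
    (g : σ → S) (p : MvPolynomial σ ℤ) :
    f (MvPolynomial.aeval g p) = MvPolynomial.aeval (fun j => f (g j)) p := by
  rw [MvPolynomial.map_aeval, MvPolynomial.aeval_def, MvPolynomial.coe_eval₂Hom]
  congr 1
  exact Subsingleton.elim _ _

lemma stmt7_split {M : Type*} [CommRing M] (m k : ℕ) (g : Fin (m + 1) → M) :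
    ∑ t ∈ (Finset.univ : Finset (Fin (m + 1))).powersetCard (k + 1), ∏ j ∈ t, g j
      = g (Fin.last m) *
          ∑ t ∈ (Finset.univ : Finset (Fin m)).powersetCard k, ∏ j ∈ t, g j.castSucc
        + ∑ t ∈ (Finset.univ : Finset (Fin m)).powersetCard (k + 1), ∏ j ∈ t, g j.castSucc := by
  classical
  have hlast : Fin.last m ∉ (Finset.univ : Finset (Fin m)).map Fin.castSuccEmb := by
    simp only [Finset.mem_map, Finset.mem_univ, true_and, Fin.castSuccEmb_apply]
    rintro ⟨a, ha⟩
    exact absurd ha (Fin.castSucc_lt_last a).ne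
  have hM : ∀ k : ℕ, ∑ t ∈ (((Finset.univ : Finset (Fin m)).map Fin.castSuccEmb).powersetCard k),
      ∏ j ∈ t, g j = ∑ t ∈ (Finset.univ : Finset (Fin m)).powersetCard k, ∏ j ∈ t, g j.castSucc := by
    intro k
    rw [Finset.powersetCard_map, Finset.sum_map]
    refine Finset.sum_congr rfl fun t _ => ?_
    rw [show (Finset.mapEmbedding Fin.castSuccEmb).toEmbedding t = t.map Fin.castSuccEmb from
      Finset.mapEmbedding_apply, Finset.prod_map]
    rfl
  rw [Fin.univ_castSuccEmb, Finset.cons_eq_insert,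
    Finset.powersetCard_succ_insert hlast]
  have hdisj : Disjoint
      (((Finset.univ : Finset (Fin m)).map Fin.castSuccEmb).powersetCard (k + 1))
      ((((Finset.univ : Finset (Fin m)).map Fin.castSuccEmb).powersetCard k).image
        (insert (Fin.last m))) := by
    rw [Finset.disjoint_left]
    intro t ht ht'
    rw [Finset.mem_powersetCard] at ht
    obtain ⟨s, hs, rfl⟩ := Finset.mem_image.mp ht'
    exact hlast (ht.1 (Finset.mem_insert_self _ _))
  rw [Finset.sum_union hdisj, hM]
  have himg : ∑ t ∈ (((Finset.univ : Finset (Fin m)).map Fin.castSuccEmb).powersetCard k).image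
        (insert (Fin.last m)), ∏ j ∈ t, g j
      = g (Fin.last m) * ∑ t ∈ (Finset.univ : Finset (Fin m)).powersetCard k,
          ∏ j ∈ t, g j.castSucc := by
    rw [Finset.sum_image ?_]
    · rw [← hM k, Finset.mul_sum]
      refine Finset.sum_congr rfl fun t ht => ?_
      rw [Finset.mem_powersetCard] at ht
      exact Finset.prod_insert fun h => hlast (ht.1 h)
    · intro t ht s hs hts
      rw [Finset.mem_coe, Finset.mem_powersetCard] at ht hs
      have h1 : Fin.last m ∉ t := fun h => hlast (ht.1 h)
      have h2 : Fin.last m ∉ s := fun h => hlast (hs.1 h)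
      rw [← Finset.erase_insert h1, ← Finset.erase_insert h2, hts]
  rw [himg]
  ring

lemma stmt7_mem_span {B K : Type*} [CommRing B] [CommRing K] (ψ : B →+* K)
    (hψ : Function.Injective ψ) (c : B) (v : K) (hv : ψ c * v = 1) (f : Polynomial B)
    (hf : Polynomial.eval₂ ψ v f = 0) :
    f ∈ Ideal.span {Polynomial.C c * Polynomial.X - 1} := by
  set N := f.natDegree with hN
  set g : B := ∑ k ∈ Finset.range (N + 1), f.coeff k * c ^ (N - k) with hg
  have hdvd1 : ∀ k : ℕ, (Polynomial.C c * Polynomial.X - 1 : Polynomial B)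
      ∣ (Polynomial.C c * Polynomial.X) ^ k - 1 := by
    intro k
    have h := sub_dvd_pow_sub_pow (Polynomial.C c * Polynomial.X) 1 k
    rwa [one_pow] at h
  have key : (Polynomial.C c) ^ N * f - Polynomial.C g
      ∈ Ideal.span {Polynomial.C c * Polynomial.X - 1} := by
    rw [Ideal.mem_span_singleton]
    have hrw : (Polynomial.C c) ^ N * f - Polynomial.C g
        = ∑ k ∈ Finset.range (N + 1), Polynomial.C (f.coeff k) * (Polynomial.C c) ^ (N - k) *
            ((Polynomial.C c * Polynomial.X) ^ k - 1) := by
      conv_lhs => rw [f.as_sum_range, hg]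
      rw [map_sum, Finset.mul_sum, ← Finset.sum_sub_distrib]
      refine Finset.sum_congr rfl fun k hk => ?_
      have hpow : (Polynomial.C c : Polynomial B) ^ N
          = (Polynomial.C c) ^ (N - k) * (Polynomial.C c) ^ k := by
        rw [← pow_add]
        congr 1
        have := Finset.mem_range.mp hk
        omega
      rw [← Polynomial.C_mul_X_pow_eq_monomial, map_mul, map_pow, hpow]
      ring
    rw [hrw]
    exact Finset.dvd_sum fun k _ => Dvd.dvd.mul_left (hdvd1 k) _
  have hg0 : g = 0 := by
    apply hψ
    rw [map_zero]
    obtain ⟨q, hq⟩ := Ideal.mem_span_singleton.mp key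
    have := congrArg (Polynomial.eval₂ ψ v) hq
    simp only [Polynomial.eval₂_mul, Polynomial.eval₂_sub, Polynomial.eval₂_one,
      Polynomial.eval₂_pow, Polynomial.eval₂_C, Polynomial.eval₂_X, hf, hv, sub_self,
      zero_mul, mul_zero, zero_sub, neg_eq_zero] at this
    exact this
  have h1 : (Polynomial.C c) ^ N * f ∈ Ideal.span {Polynomial.C c * Polynomial.X - 1} := by
    have := key
    rwa [hg0, map_zero, sub_zero] at this
  have hfeq : f = Polynomial.X ^ N * ((Polynomial.C c) ^ N * f)
      - ((Polynomial.C c * Polynomial.X) ^ N - 1) * f := by ring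
  rw [hfeq]
  exact Ideal.sub_mem _ (Ideal.mul_mem_left _ _ h1)
    (Ideal.mul_mem_right _ _ (Ideal.mem_span_singleton.mpr (hdvd1 N)))

lemma stmt7_aeval_esymm {S : Type*} [CommRing S] [Algebra ℤ S] (D k : ℕ) (g : Fin D → S) :
    MvPolynomial.aeval g (esymmPoly D k)
      = ∑ t ∈ (Finset.univ : Finset (Fin D)).powersetCard k, ∏ j ∈ t, g j := by
  rw [esymmPoly, map_sum]
  refine Finset.sum_congr rfl fun t _ => ?_
  rw [map_prod]
  exact Finset.prod_congr rfl fun j _ => MvPolynomial.aeval_X g j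

lemma stmt7_aeval_powEsymm {S : Type*} [CommRing S] [Algebra ℤ S] (D n k : ℕ) (g : Fin D → S) :
    MvPolynomial.aeval g (powEsymmPoly D n k)
      = ∑ t ∈ (Finset.univ : Finset (Fin D)).powersetCard k, ∏ j ∈ t, g j ^ n := by
  rw [powEsymmPoly, map_sum]
  refine Finset.sum_congr rfl fun t _ => ?_
  rw [map_prod]
  refine Finset.prod_congr rfl fun j _ => ?_
  rw [map_pow, MvPolynomial.aeval_X]

lemma stmt7_aeval_aeval {S : Type*} [CommRing S] [Algebra ℤ S] {σ τ : Type*}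
    (g : σ → MvPolynomial τ ℤ) (h : τ → S) (p : MvPolynomial σ ℤ) :
    MvPolynomial.aeval h (MvPolynomial.aeval g p)
      = MvPolynomial.aeval (fun j => MvPolynomial.aeval h (g j)) p :=
  stmt7_ringHom_aeval (MvPolynomial.aeval h :
    MvPolynomial τ ℤ →ₐ[ℤ] S).toRingHom g p

lemma stmt7_Einj (m : ℕ) :
    Function.Injective (MvPolynomial.aeval
      (fun j : Fin (m + 1) => esymmPoly (m + 1) (j.1 + 1)) :
      MvPolynomial (Fin (m + 1)) ℤ →ₐ[ℤ] MvPolynomial (Fin (m + 1)) ℤ) := by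
  intro p q h
  apply esymmAlgHom_fin_injective (R := ℤ) (m := m + 1) (n := m + 1) le_rfl
  apply Subtype.ext
  rw [esymmAlgHom_apply, esymmAlgHom_apply]
  exact h

noncomputable abbrev s7K (m : ℕ) : Type := FractionRing (MvPolynomial (Fin (m + 1)) ℤ)

noncomputable def s7E (m : ℕ) : MvPolynomial (Fin (m + 1)) ℤ →ₐ[ℤ] MvPolynomial (Fin (m + 1)) ℤ :=
  MvPolynomial.aeval (fun j : Fin (m + 1) => esymmPoly (m + 1) (j.1 + 1))

noncomputable def s7psi (m : ℕ) : MvPolynomial (Fin (m + 1)) ℤ →+* s7K m :=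
  (algebraMap (MvPolynomial (Fin (m + 1)) ℤ) (s7K m)).comp (s7E m).toRingHom

lemma s7psi_apply (m : ℕ) (p : MvPolynomial (Fin (m + 1)) ℤ) :
    s7psi m p = algebraMap (MvPolynomial (Fin (m + 1)) ℤ) (s7K m) (s7E m p) := rfl

lemma s7psi_X (m : ℕ) (j : Fin (m + 1)) :
    s7psi m (MvPolynomial.X j)
      = algebraMap (MvPolynomial (Fin (m + 1)) ℤ) (s7K m) (esymmPoly (m + 1) (j.1 + 1)) :=
  by simp [s7psi_apply, s7E]

lemma s7psi_inj (m : ℕ) : Function.Injective (s7psi m) := by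
  rw [s7psi, RingHom.coe_comp]
  exact (IsFractionRing.injective (MvPolynomial (Fin (m + 1)) ℤ) (s7K m)).comp (stmt7_Einj m)

noncomputable def s7c (m : ℕ) : MvPolynomial (Fin (m + 1)) ℤ := MvPolynomial.X (Fin.last m)

noncomputable def s7v (m : ℕ) : s7K m := (s7psi m (s7c m))⁻¹

lemma s7hv (m : ℕ) : s7psi m (s7c m) * s7v m = 1 := by
  refine mul_inv_cancel₀ fun h => ?_
  exact MvPolynomial.X_ne_zero (Fin.last m) (s7psi_inj m (h.trans (map_zero (s7psi m)).symm))

noncomputable def s7mu (m : ℕ) : Fin (m + 2) → s7K m := fun j =>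
  if h : j.1 < m + 1 then
    algebraMap (MvPolynomial (Fin (m + 1)) ℤ) (s7K m) (MvPolynomial.X (⟨j.1, h⟩ : Fin (m + 1)))
  else s7v m

lemma s7mu_last (m : ℕ) : s7mu m (Fin.last (m + 1)) = s7v m := by
  rw [s7mu]; simp [Fin.last]

lemma s7mu_castSucc (m : ℕ) (j : Fin (m + 1)) :
    s7mu m j.castSucc = algebraMap (MvPolynomial (Fin (m + 1)) ℤ) (s7K m) (MvPolynomial.X j) := by
  rw [s7mu]
  simp [Fin.coe_castSucc, j.isLt]

lemma s7halg (m k : ℕ) :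
    ∑ t ∈ (Finset.univ : Finset (Fin (m + 1))).powersetCard k, ∏ j ∈ t,
      algebraMap (MvPolynomial (Fin (m + 1)) ℤ) (s7K m) (MvPolynomial.X j)
    = algebraMap (MvPolynomial (Fin (m + 1)) ℤ) (s7K m) (esymmPoly (m + 1) k) := by
  rw [esymmPoly, map_sum]
  exact Finset.sum_congr rfl fun t _ => (map_prod _ _ _).symm

lemma s7halgpow (m n k : ℕ) :
    ∑ t ∈ (Finset.univ : Finset (Fin (m + 1))).powersetCard k, ∏ j ∈ t,
      algebraMap (MvPolynomial (Fin (m + 1)) ℤ) (s7K m) (MvPolynomial.X j) ^ n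
    = algebraMap (MvPolynomial (Fin (m + 1)) ℤ) (s7K m) (powEsymmPoly (m + 1) n k) := by
  rw [powEsymmPoly, map_sum]
  refine Finset.sum_congr rfl fun t _ => ?_
  rw [map_prod]
  exact Finset.prod_congr rfl fun j _ => (map_pow _ _ _).symm

lemma s7aevalE (m k : ℕ) : MvPolynomial.aeval (s7mu m) (esymmPoly (m + 2) (k + 1))
    = s7v m * algebraMap (MvPolynomial (Fin (m + 1)) ℤ) (s7K m) (esymmPoly (m + 1) k)
      + algebraMap (MvPolynomial (Fin (m + 1)) ℤ) (s7K m) (esymmPoly (m + 1) (k + 1)) := by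
  rw [stmt7_aeval_esymm, stmt7_split (m + 1) k (s7mu m), s7mu_last]
  simp only [s7mu_castSucc]
  rw [s7halg m k, s7halg m (k + 1)]

lemma s7aevalP (m n i' : ℕ) : MvPolynomial.aeval (s7mu m) (powEsymmPoly (m + 2) n (i' + 1))
    = s7v m ^ n * algebraMap (MvPolynomial (Fin (m + 1)) ℤ) (s7K m) (powEsymmPoly (m + 1) n i')
      + algebraMap (MvPolynomial (Fin (m + 1)) ℤ) (s7K m)
          (powEsymmPoly (m + 1) n (i' + 1)) := by
  rw [stmt7_aeval_powEsymm, stmt7_split (m + 1) i' (fun j => s7mu m j ^ n), s7mu_last]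
  simp only [s7mu_castSucc]
  rw [s7halgpow m n i', s7halgpow m n (i' + 1)]

noncomputable def s7ytil (m : ℕ) : Fin (m + 1) → s7K m := fun j =>
  (if _ : j.1 = 0 then s7v m
   else s7psi m (MvPolynomial.X (⟨j.1 - 1, by omega⟩ : Fin (m + 1))) * s7v m)
  + s7psi m (MvPolynomial.X j)

lemma s7es0 (m : ℕ) : esymmPoly (m + 1) 0 = 1 := by simp [esymmPoly]

lemma s7estop (m : ℕ) : esymmPoly (m + 1) (m + 2) = 0 := by
  rw [esymmPoly, Finset.powersetCard_eq_empty.mpr (by simp)]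
  simp

set_option maxHeartbeats 1000000 in
lemma s7Kmain (m n i' : ℕ) (P : MvPolynomial (Fin (m + 2)) ℤ)
    (hP : MvPolynomial.aeval (fun j : Fin (m + 2) => esymmPoly (m + 2) (j.1 + 1)) P
      = powEsymmPoly (m + 2) n (i' + 1))
    (Q₁ Q₂ : MvPolynomial (Fin (m + 1)) ℤ)
    (hQ₁ : MvPolynomial.aeval (fun j : Fin (m + 1) => esymmPoly (m + 1) (j.1 + 1)) Q₁
        = powEsymmPoly (m + 1) n i')
    (hQ₂ : MvPolynomial.aeval (fun j : Fin (m + 1) => esymmPoly (m + 1) (j.1 + 1)) Q₂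
        = powEsymmPoly (m + 1) n (i' + 1)) :
    MvPolynomial.aeval (s7ytil m) (reducePoly (m + 2) P)
      = s7v m ^ n * s7psi m Q₁ + s7psi m Q₂ := by
  have hred : reducePoly (m + 2) P = MvPolynomial.aeval
      (fun j : Fin (m + 2) => if h : j.1 < m + 1 then
        (MvPolynomial.X (⟨j.1, h⟩ : Fin (m + 1)) : MvPolynomial (Fin (m + 1)) ℤ) else 1) P := rfl
  calc MvPolynomial.aeval (s7ytil m) (reducePoly (m + 2) P)
      = MvPolynomial.aeval (fun j : Fin (m + 2) => MvPolynomial.aeval (s7ytil m)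
          (if h : j.1 < m + 1 then
            (MvPolynomial.X (⟨j.1, h⟩ : Fin (m + 1)) : MvPolynomial (Fin (m + 1)) ℤ)
          else 1)) P := by
        rw [hred]; exact stmt7_aeval_aeval _ _ P
    _ = MvPolynomial.aeval
          (fun j : Fin (m + 2) => MvPolynomial.aeval (s7mu m) (esymmPoly (m + 2) (j.1 + 1))) P := by
        refine congrArg (fun g : Fin (m + 2) → s7K m => MvPolynomial.aeval g P)
          (funext fun j => ?_)
        by_cases h : j.1 < m + 1
        · rw [dif_pos h, MvPolynomial.aeval_X, s7aevalE m j.1, s7ytil]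
          simp only
          rw [s7psi_X m ⟨j.1, h⟩]
          by_cases h0 : j.1 = 0
          · rw [dif_pos h0,
              show esymmPoly (m + 1) j.1 = 1 by rw [h0]; exact s7es0 m, map_one, mul_one]
          · rw [dif_neg h0, s7psi_X m ⟨j.1 - 1, by omega⟩]
            simp only [Fin.val_mk]
            rw [show j.1 - 1 + 1 = j.1 by omega]
            ring
        · have hj : j.1 = m + 1 := by have := j.isLt; omega
          rw [dif_neg h, map_one, show (j.1 : ℕ) + 1 = (m + 1) + 1 by omega,
            s7aevalE m (m + 1), s7estop m, map_zero, add_zero]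
          have hcc : algebraMap (MvPolynomial (Fin (m + 1)) ℤ) (s7K m)
              (esymmPoly (m + 1) (m + 1)) = s7psi m (s7c m) := by
            rw [s7c, s7psi_X m (Fin.last m), Fin.val_last]
          rw [hcc, mul_comm]
          exact (s7hv m).symm
    _ = MvPolynomial.aeval (s7mu m)
          (MvPolynomial.aeval (fun j : Fin (m + 2) => esymmPoly (m + 2) (j.1 + 1)) P) :=
        (stmt7_aeval_aeval _ _ P).symm
    _ = MvPolynomial.aeval (s7mu m) (powEsymmPoly (m + 2) n (i' + 1)) := by rw [hP]
    _ = s7v m ^ n * algebraMap (MvPolynomial (Fin (m + 1)) ℤ) (s7K m) (powEsymmPoly (m + 1) n i')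
          + algebraMap (MvPolynomial (Fin (m + 1)) ℤ) (s7K m) (powEsymmPoly (m + 1) n (i' + 1)) :=
        s7aevalP m n i'
    _ = s7v m ^ n * s7psi m Q₁ + s7psi m Q₂ := by
        rw [← hQ₁, ← hQ₂]
        rfl

noncomputable def s7yhat (m : ℕ) : Fin (m + 1) → Polynomial (MvPolynomial (Fin (m + 1)) ℤ) :=
  fun j =>
    (if _ : j.1 = 0 then Polynomial.X
     else Polynomial.C (MvPolynomial.X (⟨j.1 - 1, by omega⟩ : Fin (m + 1))) * Polynomial.X)
    + Polynomial.C (MvPolynomial.X j)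

noncomputable def s7xhat (m : ℕ) : Fin (m + 1) → Polynomial (MvPolynomial (Fin (m + 1)) ℤ) :=
  fun j => Polynomial.C (MvPolynomial.X j)

noncomputable def s7Xi (m n : ℕ) (P : MvPolynomial (Fin (m + 2)) ℤ)
    (Q₁ Q₂ : MvPolynomial (Fin (m + 1)) ℤ) : Polynomial (MvPolynomial (Fin (m + 1)) ℤ) :=
  MvPolynomial.aeval (s7yhat m) (reducePoly (m + 2) P)
    - (Polynomial.X ^ n * MvPolynomial.aeval (s7xhat m) Q₁ + MvPolynomial.aeval (s7xhat m) Q₂)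

lemma s7theta_yhat (m : ℕ) (j : Fin (m + 1)) :
    Polynomial.eval₂RingHom (s7psi m) (s7v m) (s7yhat m j) = s7ytil m j := by
  rw [s7yhat, s7ytil]
  by_cases h0 : j.1 = 0
  · simp only [dif_pos h0, Polynomial.coe_eval₂RingHom, Polynomial.eval₂_add,
      Polynomial.eval₂_X, Polynomial.eval₂_C]
  · simp only [dif_neg h0, Polynomial.coe_eval₂RingHom, Polynomial.eval₂_add,
      Polynomial.eval₂_mul, Polynomial.eval₂_X, Polynomial.eval₂_C]

set_option maxHeartbeats 1000000 in
lemma s7theta_Xi (m n i' : ℕ) (P : MvPolynomial (Fin (m + 2)) ℤ)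
    (hP : MvPolynomial.aeval (fun j : Fin (m + 2) => esymmPoly (m + 2) (j.1 + 1)) P
      = powEsymmPoly (m + 2) n (i' + 1))
    (Q₁ Q₂ : MvPolynomial (Fin (m + 1)) ℤ)
    (hQ₁ : MvPolynomial.aeval (fun j : Fin (m + 1) => esymmPoly (m + 1) (j.1 + 1)) Q₁
        = powEsymmPoly (m + 1) n i')
    (hQ₂ : MvPolynomial.aeval (fun j : Fin (m + 1) => esymmPoly (m + 1) (j.1 + 1)) Q₂
        = powEsymmPoly (m + 1) n (i' + 1)) :
    Polynomial.eval₂ (s7psi m) (s7v m) (s7Xi m n P Q₁ Q₂) = 0 := by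
  have h1 : Polynomial.eval₂ (s7psi m) (s7v m)
      (MvPolynomial.aeval (s7yhat m) (reducePoly (m + 2) P))
      = MvPolynomial.aeval (s7ytil m) (reducePoly (m + 2) P) := by
    refine (stmt7_ringHom_aeval (Polynomial.eval₂RingHom (s7psi m) (s7v m)) (s7yhat m)
      (reducePoly (m + 2) P)).trans ?_
    exact congrArg (fun g : Fin (m + 1) → s7K m => MvPolynomial.aeval g (reducePoly (m + 2) P))
      (funext fun j => s7theta_yhat m j)
  have h2 : ∀ Q : MvPolynomial (Fin (m + 1)) ℤ,
      Polynomial.eval₂ (s7psi m) (s7v m) (MvPolynomial.aeval (s7xhat m) Q) = s7psi m Q := by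
    intro Q
    refine (stmt7_ringHom_aeval (Polynomial.eval₂RingHom (s7psi m) (s7v m)) (s7xhat m) Q).trans ?_
    have h' := (stmt7_ringHom_aeval (s7psi m) MvPolynomial.X Q).symm
    rw [MvPolynomial.aeval_X_left_apply] at h'
    refine Eq.trans ?_ h'
    refine congrArg (fun g : Fin (m + 1) → s7K m => MvPolynomial.aeval g Q)
      (funext fun j => ?_)
    simp only [s7xhat, Polynomial.coe_eval₂RingHom, Polynomial.eval₂_C]
  rw [s7Xi, Polynomial.eval₂_sub, Polynomial.eval₂_add, Polynomial.eval₂_mul,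
    Polynomial.eval₂_X_pow, h1, h2 Q₁, h2 Q₂, s7Kmain m n i' P hP Q₁ Q₂ hQ₁ hQ₂, sub_self]

set_option maxHeartbeats 1000000 in
theorem stmt7_main (m n i' : ℕ) (P : MvPolynomial (Fin (m + 2)) ℤ)
    (hP : MvPolynomial.aeval (fun j : Fin (m + 2) => esymmPoly (m + 2) (j.1 + 1)) P
      = powEsymmPoly (m + 2) n (i' + 1))
    (Q₁ Q₂ : MvPolynomial (Fin (m + 1)) ℤ)
    (hQ₁ : MvPolynomial.aeval (fun j : Fin (m + 1) => esymmPoly (m + 1) (j.1 + 1)) Q₁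
        = powEsymmPoly (m + 1) n i')
    (hQ₂ : MvPolynomial.aeval (fun j : Fin (m + 1) => esymmPoly (m + 1) (j.1 + 1)) Q₂
        = powEsymmPoly (m + 1) n (i' + 1))
    (R : Type) [CommRing R] (x : Fin (m + 1) → R) (u : R)
    (hu : x (Fin.last m) * u = 1)
    (y : Fin (m + 1) → R)
    (hy : ∀ j : Fin (m + 1),
      y j = (if h : j.1 = 0 then u else x (⟨j.1 - 1, by omega⟩ : Fin (m + 1)) * u) + x j) :
    MvPolynomial.aeval y (reducePoly (m + 2) P)
      = u ^ n * MvPolynomial.aeval x Q₁ + MvPolynomial.aeval x Q₂ := by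
  have hmem := stmt7_mem_span (s7psi m) (s7psi_inj m) (s7c m) (s7v m) (s7hv m)
    (s7Xi m n P Q₁ Q₂) (s7theta_Xi m n i' P hP Q₁ Q₂ hQ₁ hQ₂)
  obtain ⟨q, hq⟩ := Ideal.mem_span_singleton.mp hmem
  set F : MvPolynomial (Fin (m + 1)) ℤ →+* R :=
    (MvPolynomial.aeval x : MvPolynomial (Fin (m + 1)) ℤ →ₐ[ℤ] R).toRingHom with hF
  have hFX : ∀ j : Fin (m + 1), F (MvPolynomial.X j) = x j := fun j => by
    rw [hF]; exact MvPolynomial.aeval_X x j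
  have hρXi : Polynomial.eval₂ F u (s7Xi m n P Q₁ Q₂) = 0 := by
    rw [hq, Polynomial.eval₂_mul, Polynomial.eval₂_sub, Polynomial.eval₂_one,
      Polynomial.eval₂_mul, Polynomial.eval₂_C, Polynomial.eval₂_X, s7c, hFX, hu,
      sub_self, zero_mul]
  have h1 : Polynomial.eval₂ F u (MvPolynomial.aeval (s7yhat m) (reducePoly (m + 2) P))
      = MvPolynomial.aeval y (reducePoly (m + 2) P) := by
    refine (stmt7_ringHom_aeval (Polynomial.eval₂RingHom F u) (s7yhat m)
      (reducePoly (m + 2) P)).trans ?_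
    refine congrArg (fun g : Fin (m + 1) → R => MvPolynomial.aeval g (reducePoly (m + 2) P))
      (funext fun j => ?_)
    rw [hy j, s7yhat]
    by_cases h0 : j.1 = 0
    · simp only [dif_pos h0, Polynomial.coe_eval₂RingHom, Polynomial.eval₂_add,
        Polynomial.eval₂_X, Polynomial.eval₂_C, hFX]
    · simp only [dif_neg h0, Polynomial.coe_eval₂RingHom, Polynomial.eval₂_add,
        Polynomial.eval₂_mul, Polynomial.eval₂_X, Polynomial.eval₂_C, hFX]
  have h2 : ∀ Q : MvPolynomial (Fin (m + 1)) ℤ,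
      Polynomial.eval₂ F u (MvPolynomial.aeval (s7xhat m) Q) = MvPolynomial.aeval x Q := by
    intro Q
    refine (stmt7_ringHom_aeval (Polynomial.eval₂RingHom F u) (s7xhat m) Q).trans ?_
    have hfun : (fun j : Fin (m + 1) => (Polynomial.eval₂RingHom F u) (s7xhat m j)) = x := by
      funext j
      simp only [s7xhat, Polynomial.coe_eval₂RingHom, Polynomial.eval₂_C, hFX]
    rw [hfun]
  rw [s7Xi, Polynomial.eval₂_sub, Polynomial.eval₂_add, Polynomial.eval₂_mul,
    Polynomial.eval₂_X_pow, h1, h2 Q₁, h2 Q₂] at hρXi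
  exact sub_eq_zero.mp hρXi

/-- Proposition: `P̂_d^{(n,i)}(y₁,…,y_{d−1}) = x_{d−1}^{−n} P_{d−1}^{(n,i−1)}(x) + P_{d−1}^{(n,i)}(x)`,
stated in an arbitrary commutative ring `R` containing elements `x₁,…,x_{d−1}` together with an
inverse `u` of `x_{d−1}` (this is equivalent to the identity in the Laurent polynomial ring
`ℤ[x₁,…,x_{d−2},x_{d−1}^{±1}]`, by its universal property). -/
theorem stmt7 (d n i : ℕ) (hd : 2 ≤ d) (hn : 1 ≤ n) (hi1 : 1 ≤ i) (hid : i ≤ d - 1)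
    (P : MvPolynomial (Fin d) ℤ)
    (hP : MvPolynomial.aeval (fun j : Fin d => esymmPoly d (j.1 + 1)) P = powEsymmPoly d n i)
    (Q₁ Q₂ : MvPolynomial (Fin (d - 1)) ℤ)
    (hQ₁ : MvPolynomial.aeval (fun j : Fin (d - 1) => esymmPoly (d - 1) (j.1 + 1)) Q₁
        = powEsymmPoly (d - 1) n (i - 1))
    (hQ₂ : MvPolynomial.aeval (fun j : Fin (d - 1) => esymmPoly (d - 1) (j.1 + 1)) Q₂
        = powEsymmPoly (d - 1) n i)
    (R : Type) [CommRing R] (x : Fin (d - 1) → R) (u : R)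
    (hu : x (⟨d - 2, by omega⟩ : Fin (d - 1)) * u = 1)
    (y : Fin (d - 1) → R)
    (hy : ∀ j : Fin (d - 1),
      y j = (if h : j.1 = 0 then u else x (⟨j.1 - 1, by omega⟩ : Fin (d - 1)) * u) + x j) :
    MvPolynomial.aeval y (reducePoly d P)
      = u ^ n * MvPolynomial.aeval x Q₁ + MvPolynomial.aeval x Q₂ := by
  obtain ⟨m, rfl⟩ : ∃ m, d = m + 2 := ⟨d - 2, by omega⟩
  obtain ⟨i', rfl⟩ : ∃ i'', i = i'' + 1 := ⟨i - 1, by omega⟩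
  exact stmt7_main m n i' P hP Q₁ Q₂ hQ₁ hQ₂ R x u hu y hy
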